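/- The sequence c is strictly increasing, c(i) < (w−√(w²−4w))/2 for every i ≥ 0, and c(i) → (w−√(w²−4w))/2 as i → ∞. Equivalently, the series 1 + ∑_{i=1}^{∞} ∏_{j=1}^{i} b(j) converges and its sum equals (w−√(w²−4w))/2. -/

import Mathlib

/-- The sequence `b` with `b 0 = 0` and `b i = (1 + b (i-1)) / (w - 1 - b (i-1))`. -/
noncomputable def bseq (w : ℝ) : ℕ → ℝ
  | 0 => 0
  | i + 1 => (1 + bseq w i) / (w - 1 - bseq w i)

/-- The sequence `a` with `a 0 = 1` and `a i = a (i-1) / (w - 1 - b (i-1))`. -/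
noncomputable def aseq (w : ℝ) : ℕ → ℝ
  | 0 => 1
  | i + 1 => aseq w i / (w - 1 - bseq w i)

/-- The sequence `d` with `d 0 = 1` and `d i = d (i-1) * (1 + b (i-1))`. -/
noncomputable def dseq (w : ℝ) : ℕ → ℝ
  | 0 => 1
  | i + 1 => dseq w i * (1 + bseq w i)

/-- The sequence `c` with `c 0 = 0` and `c i = c (i-1) + d (i-1) * a (i-1)`. -/
noncomputable def cseq (w : ℝ) : ℕ → ℝ
  | 0 => 0
  | i + 1 => cseq w i + dseq w i * aseq w i


noncomputable def pp (w : ℝ) : ℝ := (w - 2 - Real.sqrt (w ^ 2 - 4 * w)) / 2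

noncomputable def G (w : ℝ) (m : ℕ) : ℝ := ∑ i ∈ Finset.range m, (pp w) ^ i

lemma sqrt_sq' {w : ℝ} (hw : 4 ≤ w) : Real.sqrt (w ^ 2 - 4 * w) ^ 2 = w ^ 2 - 4 * w := by
  rw [Real.sq_sqrt]; nlinarith

lemma pp_pos {w : ℝ} (hw : 4 ≤ w) : 0 < pp w := by
  have h := sqrt_sq' hw
  have h0 : (0:ℝ) ≤ Real.sqrt (w ^ 2 - 4 * w) := Real.sqrt_nonneg _
  unfold pp
  nlinarith [h, h0]

lemma pp_le_one {w : ℝ} (hw : 4 ≤ w) : pp w ≤ 1 := by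
  have h := sqrt_sq' hw
  have h0 : (0:ℝ) ≤ Real.sqrt (w ^ 2 - 4 * w) := Real.sqrt_nonneg _
  unfold pp
  nlinarith [h, h0]

lemma pp_quad {w : ℝ} (hw : 4 ≤ w) : pp w ^ 2 - (w - 2) * pp w + 1 = 0 := by
  unfold pp
  linear_combination (sqrt_sq' hw) / 4

lemma hL {w : ℝ} : (w - Real.sqrt (w ^ 2 - 4 * w)) / 2 = 1 + pp w := by
  unfold pp; ring

lemma G_succ (w : ℝ) (m : ℕ) : G w (m + 1) = G w m + pp w ^ m :=
  Finset.sum_range_succ _ _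

lemma G_succ' (w : ℝ) (m : ℕ) : G w (m + 1) = 1 + pp w * G w m := by
  unfold G
  rw [Finset.sum_range_succ', Finset.mul_sum]
  simp [pow_succ']; ring

lemma G_nonneg {w : ℝ} (hw : 4 ≤ w) (m : ℕ) : 0 ≤ G w m :=
  Finset.sum_nonneg fun i _ => pow_nonneg (pp_pos hw).le i

lemma G_ge_one {w : ℝ} (hw : 4 ≤ w) (m : ℕ) : 1 ≤ G w (m + 1) := by
  rw [G_succ']
  nlinarith [G_nonneg hw m, (pp_pos hw).le]

lemma G_pos {w : ℝ} (hw : 4 ≤ w) (m : ℕ) : 0 < G w (m + 1) :=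
  lt_of_lt_of_le one_pos (G_ge_one hw m)

lemma bseq_eq {w : ℝ} (hw : 4 ≤ w) : ∀ m, bseq w m = pp w * G w m / G w (m + 2)
  | 0 => by simp [bseq, G]
  | (m + 1) => by
    have hp := pp_pos hw
    have h2 := G_pos hw (m + 1)
    have h3 := G_pos hw (m + 2)
    have hq : pp w * (w - 1) = pp w ^ 2 + pp w + 1 := by
      linear_combination - pp_quad hw
    have hnum : G w (m + 2) + pp w * G w m = (1 + pp w) * G w (m + 1) := by
      have e1 := G_succ w (m + 1)
      have e2 : pp w * G w (m + 1) = pp w * G w m + pp w ^ (m + 1) := by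
        rw [G_succ]; ring
      linarith
    have hden : pp w * ((w - 1) * G w (m + 2) - pp w * G w m)
        = (1 + pp w) * G w (m + 3) := by
      have e1 : G w (m + 3) = G w (m + 2) + pp w ^ (m + 2) := G_succ w (m + 2)
      have e2 : G w (m + 2) = G w m + pp w ^ m + pp w ^ (m + 1) := by
        rw [G_succ, G_succ]
      rw [e1, e2]
      linear_combination (G w m + pp w ^ m + pp w ^ (m + 1)) * hq
    have hb1 : pp w * G w m ≤ G w (m + 2) := by
      have e1 := G_succ' w m
      have e2 := G_succ w (m + 1)
      nlinarith [pow_nonneg hp.le (m + 1)]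
    have hDpos : 0 < w - 1 - bseq w m := by
      rw [bseq_eq hw m]
      have : pp w * G w m / G w (m + 2) ≤ 1 := by
        rw [div_le_one h2]; exact hb1
      linarith
    rw [bseq_eq hw m] at hDpos
    rw [bseq, bseq_eq hw m]
    show _ = pp w * G w (m + 1) / G w (m + 3)
    rw [div_eq_div_iff hDpos.ne' h3.ne']
    have key : (G w (m + 2) + pp w * G w m) * G w (m + 3)
        = pp w * G w (m + 1) * ((w - 1) * G w (m + 2) - pp w * G w m) := by
      linear_combination G w (m + 3) * hnum - G w (m + 1) * hden
    simp only [show m + 2 + 1 = m + 3 from rfl, show m + 1 + 1 = m + 2 from rfl] at *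
    field_simp
    linear_combination key

lemma bseq_nonneg {w : ℝ} (hw : 4 ≤ w) (m : ℕ) : 0 ≤ bseq w m := by
  rw [bseq_eq hw m]
  exact div_nonneg (mul_nonneg (pp_pos hw).le (G_nonneg hw m)) (G_pos hw (m + 1)).le

lemma denom_pos {w : ℝ} (hw : 4 ≤ w) (m : ℕ) : 0 < w - 1 - bseq w m := by
  have hp := pp_pos hw
  have h2 := G_pos hw (m + 1)
  have hb1 : pp w * G w m ≤ G w (m + 2) := by
    have e1 := G_succ' w m
    have e2 := G_succ w (m + 1)
    nlinarith [pow_nonneg hp.le (m + 1)]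
  rw [bseq_eq hw m]
  have : pp w * G w m / G w (m + 2) ≤ 1 := by
    rw [div_le_one h2]; exact hb1
  linarith

lemma da_succ {w : ℝ} (hw : 4 ≤ w) (m : ℕ) :
    dseq w (m + 1) * aseq w (m + 1) = dseq w m * aseq w m * bseq w (m + 1) := by
  rw [dseq, aseq, bseq]
  ring

lemma da_eq {w : ℝ} (hw : 4 ≤ w) :
    ∀ m, dseq w m * aseq w m = pp w ^ m * (1 + pp w) / (G w (m + 1) * G w (m + 2))
  | 0 => by
    have h2 : G w 2 = 1 + pp w := by
      have := G_succ' w 1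
      have h1 : G w 1 = 1 := by simp [G]
      rw [this, h1]; ring
    simp [dseq, aseq, G, h2]
    have hne : pp w + 1 ≠ 0 := by nlinarith [pp_pos hw]
    field_simp
    ring
  | (m + 1) => by
    have hp := pp_pos hw
    have h1 := G_pos hw m
    have h2 := G_pos hw (m + 1)
    have h3 := G_pos hw (m + 2)
    rw [da_succ hw, da_eq hw m, bseq_eq hw (m + 1)]
    simp only [show m + 1 + 2 = m + 3 from rfl, show m + 1 + 1 = m + 2 from rfl]
    field_simp
    ring

lemma Gsq {w : ℝ} (hw : 4 ≤ w) (m : ℕ) :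
    G w (m + 1) ^ 2 = G w m * G w (m + 2) + pp w ^ m := by
  have h1 := G_succ' w m
  have h2 := G_succ' w (m + 1)
  have h3 := G_succ w m
  simp only [show m + 1 + 1 = m + 2 from rfl] at h2
  have hq : pp w ^ m = 1 + pp w * G w m - G w m := by linarith
  rw [h2, h1, hq]
  ring

lemma cseq_eq {w : ℝ} (hw : 4 ≤ w) :
    ∀ m, cseq w m = (1 + pp w) * G w m / G w (m + 1)
  | 0 => by simp [cseq, G]
  | (m + 1) => by
    have hp := pp_pos hw
    have h1 := G_pos hw m
    have h2 := G_pos hw (m + 1)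
    rw [cseq, cseq_eq hw m, da_eq hw m]
    simp only [show m + 1 + 1 = m + 2 from rfl]
    rw [div_add_div _ _ h1.ne' (by positivity : (G w (m + 1) * G w (m + 2)) ≠ 0),
      div_eq_div_iff (by positivity) h2.ne']
    linear_combination (-(1 + pp w) * G w (m + 1) * G w (m + 2)) * Gsq hw m

lemma prod_eq {w : ℝ} (hw : 4 ≤ w) :
    ∀ m, ∏ j ∈ Finset.Icc 1 m, bseq w j = dseq w m * aseq w m
  | 0 => by simp [dseq, aseq]
  | (m + 1) => by
    rw [Finset.prod_Icc_succ_top (Nat.succ_le_succ (Nat.zero_le m)), prod_eq hw m,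
      da_succ hw m]

/-- the sequence `c` strictly increases to `(w - √(w² - 4w)) / 2`;
equivalently, `1 + ∑_{i=1}^∞ ∏_{j=1}^{i} b j = (w - √(w² - 4w)) / 2`. -/
theorem cseq_tendsto_optimal_ratio (w : ℝ) (hw : 4 ≤ w) :
    StrictMono (cseq w) ∧
    (∀ i : ℕ, cseq w i < (w - Real.sqrt (w ^ 2 - 4 * w)) / 2) ∧
    Filter.Tendsto (cseq w) Filter.atTop (nhds ((w - Real.sqrt (w ^ 2 - 4 * w)) / 2)) ∧
    Summable (fun i : ℕ => ∏ j ∈ Finset.Icc 1 (i + 1), bseq w j) ∧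
    1 + ∑' i : ℕ, ∏ j ∈ Finset.Icc 1 (i + 1), bseq w j
      = (w - Real.sqrt (w ^ 2 - 4 * w)) / 2 := by
  have hp := pp_pos hw
  have hp1 := pp_le_one hw
  have h1p : (0:ℝ) < 1 + pp w := by linarith
  rw [hL]
  -- strict bound
  have hlt : ∀ i : ℕ, cseq w i < 1 + pp w := by
    intro i
    rw [cseq_eq hw i, div_lt_iff₀ (G_pos hw i)]
    have hGlt : G w i < G w (i + 1) := by
      rw [G_succ]; nlinarith [pow_pos hp i]
    nlinarith [hGlt]
  -- tendsto
  have htendc : Filter.Tendsto (cseq w) Filter.atTop (nhds (1 + pp w)) := by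
    have t0 : Filter.Tendsto (fun n : ℕ => (1 + pp w) * (1 / ((n:ℝ) + 1)))
        Filter.atTop (nhds 0) := by
      simpa using tendsto_one_div_add_atTop_nhds_zero_nat.const_mul (1 + pp w)
    have tlow : Filter.Tendsto (fun n : ℕ => (1 + pp w) - (1 + pp w) * (1 / ((n:ℝ) + 1)))
        Filter.atTop (nhds (1 + pp w)) := by
      simpa using (tendsto_const_nhds (x := 1 + pp w) (f := Filter.atTop)).sub t0
    refine tendsto_of_tendsto_of_tendsto_of_le_of_le tlow tendsto_const_nhds ?_ ?_
    · intro n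
      have hGn1 : ((n:ℝ) + 1) * pp w ^ n ≤ G w (n + 1) := by
        have : ∑ i ∈ Finset.range (n + 1), pp w ^ n ≤ ∑ i ∈ Finset.range (n + 1), pp w ^ i :=
          Finset.sum_le_sum fun i hi =>
            pow_le_pow_of_le_one hp.le hp1 (Finset.mem_range_succ_iff.mp hi)
        unfold G
        simpa [Finset.sum_const, nsmul_eq_mul, add_comm] using this
      have h5 : pp w ^ n / G w (n + 1) ≤ 1 / ((n:ℝ) + 1) := by
        rw [div_le_div_iff₀ (G_pos hw n) (by positivity)]
        nlinarith [hGn1]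
      have hdiv : G w n / G w (n + 1) = 1 - pp w ^ n / G w (n + 1) := by
        have hne := (G_pos hw n).ne'
        rw [G_succ] at hne ⊢
        field_simp
        ring
      have key := mul_le_mul_of_nonneg_left h5 h1p.le
      rw [cseq_eq hw n, mul_div_assoc, hdiv]
      nlinarith [key]
    · exact fun n => (hlt n).le
  -- telescoping sums
  have ht : ∀ i : ℕ, (∏ j ∈ Finset.Icc 1 (i + 1), bseq w j)
      = cseq w (i + 1 + 1) - cseq w (i + 1) := by
    intro i
    rw [prod_eq hw (i + 1)]
    rw [show cseq w (i + 1 + 1) = cseq w (i + 1) + dseq w (i + 1) * aseq w (i + 1) from rfl]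
    ring
  have hc1 : cseq w 1 = 1 := by
    show cseq w (0 + 1) = 1
    rw [cseq]
    simp [cseq, dseq, aseq]
  have hsum : ∀ n : ℕ, ∑ i ∈ Finset.range n, (∏ j ∈ Finset.Icc 1 (i + 1), bseq w j)
      = cseq w (n + 1) - 1 := by
    intro n
    rw [Finset.sum_congr rfl fun i _ => ht i]
    rw [Finset.sum_range_sub (fun k => cseq w (k + 1)) n, hc1]
  have htsum : Filter.Tendsto
      (fun n : ℕ => ∑ i ∈ Finset.range n, (∏ j ∈ Finset.Icc 1 (i + 1), bseq w j))
      Filter.atTop (nhds (pp w)) := by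
    have comp := (htendc.comp (Filter.tendsto_add_atTop_nat 1)).sub_const 1
    rw [show (1 + pp w) - 1 = pp w by ring] at comp
    exact comp.congr fun n => (hsum n).symm
  have hnn : ∀ i : ℕ, 0 ≤ ∏ j ∈ Finset.Icc 1 (i + 1), bseq w j := fun i =>
    Finset.prod_nonneg fun j _ => bseq_nonneg hw j
  have hsummable : Summable (fun i : ℕ => ∏ j ∈ Finset.Icc 1 (i + 1), bseq w j) := by
    apply summable_of_sum_range_le hnn
    intro n
    rw [hsum n]
    linarith [hlt (n + 1)]
  refine ⟨?_, hlt, htendc, hsummable, ?_⟩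
  · apply strictMono_nat_of_lt_succ
    intro n
    have hda : 0 < dseq w n * aseq w n := by
      rw [da_eq hw n]
      exact div_pos (by positivity) (mul_pos (G_pos hw n) (G_pos hw (n + 1)))
    rw [show cseq w (n + 1) = cseq w n + dseq w n * aseq w n from rfl]
    linarith
  · have := tendsto_nhds_unique hsummable.hasSum.tendsto_sum_nat htsum
    rw [this]
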